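/- arXiv:2403.11117 — 3 statements merged into one kernel-verified Lean document; each statement's English description precedes it below -/
import Mathlib

section
/- Let X be exponentially distributed with mean Ω_u > 0, let Y have the Gamma distribution of shape parameter α+1 > 0 and scale parameter β > 0, with X and Y independent, and let κ > 0, ε > 0. Then, with P(ρ) := P( ρX/(κ²ρY² + 1) < ε ): (i) lim_{ρ→∞} P(ρ) = P( X < εκ²Y² ); (ii) 0 < P(X < εκ²Y²) < 1; and consequently (iii) lim_{ρ→∞} −log P(ρ) / log ρ = 0, i.e., the secrecy diversity order of the data signal is zero. -/
open MeasureTheory ProbabilityTheory Real Filter Topology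

/-- A gamma measure has no atoms (it is absolutely continuous w.r.t. Lebesgue). -/
lemma gammaMeasure_singleton_aux (a r x : ℝ) : gammaMeasure a r {x} = 0 := by
  rw [gammaMeasure, withDensity_apply _ (measurableSet_singleton x),
    Measure.restrict_eq_zero.mpr (by simp)]
  simp

/-- A gamma measure gives positive mass to any nonempty open interval in `[0, ∞)`. -/
lemma gammaMeasure_Ioo_pos_aux {a r l u : ℝ} (ha : 0 < a) (hr : 0 < r) (hl : 0 ≤ l)
    (hlu : l < u) : 0 < gammaMeasure a r (Set.Ioo l u) := by
  rw [gammaMeasure, withDensity_apply _ measurableSet_Ioo, pos_iff_ne_zero]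
  intro h0
  have hmeas : Measurable (gammaPDF a r) := (measurable_gammaPDFReal a r).ennreal_ofReal
  rw [setLIntegral_eq_zero_iff measurableSet_Ioo hmeas] at h0
  rw [ae_iff] at h0
  have hsub : Set.Ioo l u ⊆ {x | ¬ (x ∈ Set.Ioo l u → gammaPDF a r x = 0)} := fun x hx h' =>
    ((ENNReal.ofReal_pos.mpr (gammaPDFReal_pos ha hr (lt_of_le_of_lt hl hx.1))).ne') (h' hx)
  have hle := measure_mono (μ := volume) hsub
  rw [h0, le_zero_iff, Real.volume_Ioo, ENNReal.ofReal_eq_zero] at hle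
  linarith

/-- Remark 1: with `X` exponential of mean `Ωu` (direct link power gain) and
`Y` Gamma(α+1, scale β) (cascaded RIS gain), independent, the secrecy outage
probability `P(ρ) = P(ρX/(κ²ρY² + 1) < ε)` of the data signal converges, as the
transmit SNR `ρ → ∞`, to the error floor `P(X < εκ²Y²) ∈ (0, 1)`; hence the
secrecy diversity order `lim_{ρ→∞} -log P(ρ)/log ρ` equals zero. -/
theorem secrecy_diversity_order_data_zero
    {Ω' : Type*} [MeasurableSpace Ω'] (μ : Measure Ω') [IsProbabilityMeasure μ]
    (X Y : Ω' → ℝ) (hXm : Measurable X) (hYm : Measurable Y)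
    (α β Ωu : ℝ) (hα : 0 < α + 1) (hβ : 0 < β) (hΩu : 0 < Ωu)
    (hX : μ.map X = expMeasure Ωu⁻¹)
    (hY : μ.map Y = gammaMeasure (α + 1) β⁻¹)
    (hInd : IndepFun X Y μ)
    (κ ε : ℝ) (hκ : 0 < κ) (hε : 0 < ε) :
    Tendsto (fun ρ : ℝ =>
        (μ {ω | ρ * X ω / (κ ^ 2 * ρ * (Y ω) ^ 2 + 1) < ε}).toReal) atTop
      (nhds ((μ {ω | X ω < ε * κ ^ 2 * (Y ω) ^ 2}).toReal)) ∧
    (0 < (μ {ω | X ω < ε * κ ^ 2 * (Y ω) ^ 2}).toReal ∧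
      (μ {ω | X ω < ε * κ ^ 2 * (Y ω) ^ 2}).toReal < 1) ∧
    Tendsto (fun ρ : ℝ =>
        -Real.log ((μ {ω | ρ * X ω / (κ ^ 2 * ρ * (Y ω) ^ 2 + 1) < ε}).toReal) /
          Real.log ρ) atTop (nhds 0) := by
  have hr : (0:ℝ) < Ωu⁻¹ := inv_pos.mpr hΩu
  have hrβ : (0:ℝ) < β⁻¹ := inv_pos.mpr hβ
  haveI hPX : IsProbabilityMeasure (μ.map X) := by
    rw [hX]; exact isProbabilityMeasure_expMeasure hr
  haveI hPY : IsProbabilityMeasure (μ.map Y) := by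
    rw [hY]; exact isProbabilityMeasure_gammaMeasure hα hrβ
  set c : ℝ := ε * κ ^ 2 with hc
  have hcpos : 0 < c := by positivity
  have hmg : Measurable fun ω => c * Y ω ^ 2 := (hYm.pow_const 2).const_mul c
  have hSm : ∀ d : ℝ, MeasurableSet {ω | X ω < c * Y ω ^ 2 + d} := fun d =>
    measurableSet_lt hXm (hmg.add_const d)
  have hSm0 : MeasurableSet {ω | X ω < c * Y ω ^ 2} := measurableSet_lt hXm hmg
  -- the boundary event is null
  have hnull : μ {ω | X ω = c * Y ω ^ 2} = 0 := by
    have hT : Measurable fun ω => (X ω, Y ω) := hXm.prodMk hYm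
    have hprod : μ.map (fun ω => (X ω, Y ω)) = (μ.map X).prod (μ.map Y) :=
      (indepFun_iff_map_prod_eq_prod_map_map hXm.aemeasurable hYm.aemeasurable).mp hInd
    have hSset : MeasurableSet {p : ℝ × ℝ | p.1 = c * p.2 ^ 2} :=
      measurableSet_eq_fun measurable_fst ((measurable_snd.pow_const 2).const_mul c)
    have hpre : {ω | X ω = c * Y ω ^ 2}
        = (fun ω => (X ω, Y ω)) ⁻¹' {p : ℝ × ℝ | p.1 = c * p.2 ^ 2} := rfl
    rw [hpre, ← Measure.map_apply hT hSset, hprod, Measure.prod_apply_symm hSset]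
    have hslice : ∀ y : ℝ,
        (μ.map X) ((fun x : ℝ => (x, y)) ⁻¹' {p : ℝ × ℝ | p.1 = c * p.2 ^ 2}) = 0 := by
      intro y
      have : ((fun x : ℝ => (x, y)) ⁻¹' {p : ℝ × ℝ | p.1 = c * p.2 ^ 2}) = {c * y ^ 2} := by
        ext x; simp
      rw [this, hX, expMeasure]
      exact gammaMeasure_singleton_aux _ _ _
    rw [lintegral_congr hslice, lintegral_zero]
  have hle_eq : μ {ω | X ω ≤ c * Y ω ^ 2} = μ {ω | X ω < c * Y ω ^ 2} := by
    apply le_antisymm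
    · have hsub : {ω | X ω ≤ c * Y ω ^ 2}
          ⊆ {ω | X ω < c * Y ω ^ 2} ∪ {ω | X ω = c * Y ω ^ 2} := by
        intro ω hω
        have hω' : X ω ≤ c * Y ω ^ 2 := hω
        rcases lt_or_eq_of_le hω' with h | h
        exacts [Or.inl h, Or.inr h]
      calc μ {ω | X ω ≤ c * Y ω ^ 2}
          ≤ μ ({ω | X ω < c * Y ω ^ 2} ∪ {ω | X ω = c * Y ω ^ 2}) := measure_mono hsub
        _ ≤ μ {ω | X ω < c * Y ω ^ 2} + μ {ω | X ω = c * Y ω ^ 2} := measure_union_le _ _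
        _ = μ {ω | X ω < c * Y ω ^ 2} := by rw [hnull, add_zero]
    · exact measure_mono fun ω hω => (le_of_lt (hω : X ω < _) : X ω ≤ _)
  -- reformulation of the outage event for positive ρ
  have hset : ∀ ρ : ℝ, 0 < ρ → {ω | ρ * X ω / (κ ^ 2 * ρ * Y ω ^ 2 + 1) < ε}
      = {ω | X ω < c * Y ω ^ 2 + ε / ρ} := by
    intro ρ hρ; ext ω
    have hD : 0 < κ ^ 2 * ρ * Y ω ^ 2 + 1 := by positivity
    simp only [Set.mem_setOf_eq]
    have hre : ε * (κ ^ 2 * ρ * Y ω ^ 2 + 1) = ρ * (c * Y ω ^ 2 + ε / ρ) := by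
      field_simp; ring
    rw [div_lt_iff₀ hD, hre, mul_lt_mul_iff_right₀ hρ]
  -- the decreasing sequence of events
  set B : ℕ → Set Ω' := fun n => {ω | X ω < c * Y ω ^ 2 + ε / ((n : ℝ) + 1)} with hB
  have hBanti : Antitone B := by
    intro n m hnm ω hω
    simp only [hB, Set.mem_setOf_eq] at hω ⊢
    have hcast : (n : ℝ) ≤ (m : ℝ) := Nat.cast_le.mpr hnm
    have : ε / ((m : ℝ) + 1) ≤ ε / ((n : ℝ) + 1) :=
      div_le_div_of_nonneg_left hε.le (by positivity) (by linarith)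
    linarith
  have hBInter : ⋂ n, B n = {ω | X ω ≤ c * Y ω ^ 2} := by
    ext ω
    simp only [Set.mem_iInter, hB, Set.mem_setOf_eq]
    constructor
    · intro h
      by_contra hcon
      push_neg at hcon
      have h1 : 0 < X ω - c * Y ω ^ 2 := sub_pos.mpr hcon
      obtain ⟨n, hn⟩ := exists_nat_gt (ε / (X ω - c * Y ω ^ 2))
      rw [div_lt_iff₀ h1] at hn
      have h2 := h n
      have h3 : ε / ((n : ℝ) + 1) < X ω - c * Y ω ^ 2 := by
        rw [div_lt_iff₀ (by positivity)]
        nlinarith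
      linarith
    · intro h n
      have : 0 < ε / ((n : ℝ) + 1) := by positivity
      linarith
  have hBmeas : ∀ n, MeasurableSet (B n) := fun n => hSm _
  have hlim1 : Tendsto (fun n => μ (B n)) atTop (𝓝 (μ {ω | X ω < c * Y ω ^ 2})) := by
    have := tendsto_measure_iInter_atTop (μ := μ) (fun n => (hBmeas n).nullMeasurableSet)
      hBanti ⟨0, measure_ne_top μ _⟩
    rw [hBInter, hle_eq] at this
    exact this
  have hlimN : Tendsto (fun n => (μ (B n)).toReal) atTop
      (𝓝 ((μ {ω | X ω < c * Y ω ^ 2}).toReal)) :=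
    (ENNReal.tendsto_toReal (measure_ne_top μ _)).comp hlim1
  -- part (i) : the limit of the outage probability
  have hmainlim : Tendsto (fun ρ : ℝ =>
      (μ {ω | ρ * X ω / (κ ^ 2 * ρ * Y ω ^ 2 + 1) < ε}).toReal) atTop
      (𝓝 ((μ {ω | X ω < c * Y ω ^ 2}).toReal)) := by
    have hupper : Tendsto (fun ρ : ℝ => (μ (B (⌊ρ⌋₊ - 1))).toReal) atTop
        (𝓝 ((μ {ω | X ω < c * Y ω ^ 2}).toReal)) :=
      hlimN.comp ((tendsto_sub_atTop_nat 1).comp tendsto_nat_floor_atTop)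
    refine tendsto_of_tendsto_of_tendsto_of_le_of_le' tendsto_const_nhds hupper ?_ ?_
    · filter_upwards [eventually_ge_atTop (1:ℝ)] with ρ hρ
      have hρ0 : (0:ℝ) < ρ := lt_of_lt_of_le one_pos hρ
      rw [hset ρ hρ0]
      refine ENNReal.toReal_mono (measure_ne_top μ _) (measure_mono ?_)
      intro ω hω
      simp only [Set.mem_setOf_eq] at hω ⊢
      have : 0 < ε / ρ := by positivity
      linarith
    · filter_upwards [eventually_ge_atTop (1:ℝ)] with ρ hρ
      have hρ0 : (0:ℝ) < ρ := lt_of_lt_of_le one_pos hρ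
      rw [hset ρ hρ0]
      refine ENNReal.toReal_mono (measure_ne_top μ _) (measure_mono ?_)
      intro ω hω
      simp only [hB, Set.mem_setOf_eq] at hω ⊢
      have hfloor : 1 ≤ ⌊ρ⌋₊ := Nat.le_floor (by exact_mod_cast hρ)
      have hcast : ((⌊ρ⌋₊ - 1 : ℕ) : ℝ) + 1 = (⌊ρ⌋₊ : ℝ) := by
        rw [← Nat.cast_add_one, Nat.sub_add_cancel hfloor]
      have hfl : ((⌊ρ⌋₊ : ℕ) : ℝ) ≤ ρ := Nat.floor_le (by linarith)
      have hflpos : (0:ℝ) < (⌊ρ⌋₊ : ℝ) := by exact_mod_cast hfloor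
      have : ε / ρ ≤ ε / (((⌊ρ⌋₊ - 1 : ℕ) : ℝ) + 1) := by
        rw [hcast]
        exact div_le_div_of_nonneg_left hε.le hflpos hfl
      linarith
  -- part (ii) : the error floor is in (0,1)
  have hposX : 0 < μ (X ⁻¹' Set.Iio c) := by
    have heq : μ (X ⁻¹' Set.Iio c) = (μ.map X) (Set.Iio c) :=
      (Measure.map_apply hXm measurableSet_Iio).symm
    rw [heq, hX, expMeasure]
    exact lt_of_lt_of_le (gammaMeasure_Ioo_pos_aux one_pos hr le_rfl hcpos)
      (measure_mono Set.Ioo_subset_Iio_self)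
  have hposY1 : 0 < μ (Y ⁻¹' Set.Ioi 1) := by
    have heq : μ (Y ⁻¹' Set.Ioi 1) = (μ.map Y) (Set.Ioi 1) :=
      (Measure.map_apply hYm measurableSet_Ioi).symm
    rw [heq, hY]
    exact lt_of_lt_of_le (gammaMeasure_Ioo_pos_aux hα hrβ zero_le_one one_lt_two)
      (measure_mono fun x hx => hx.1)
  have hposE : 0 < μ {ω | X ω < c * Y ω ^ 2} := by
    refine lt_of_lt_of_le ?_ (measure_mono (s := X ⁻¹' Set.Iio c ∩ Y ⁻¹' Set.Ioi 1) ?_)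
    · rw [hInd.measure_inter_preimage_eq_mul _ _ measurableSet_Iio measurableSet_Ioi]
      exact ENNReal.mul_pos hposX.ne' hposY1.ne'
    · rintro ω ⟨h1, h2⟩
      simp only [Set.mem_preimage, Set.mem_Iio, Set.mem_Ioi] at h1 h2
      simp only [Set.mem_setOf_eq]
      have hY2 : 1 < Y ω ^ 2 := by nlinarith
      nlinarith [mul_lt_mul_of_pos_left hY2 hcpos]
  have hltE : μ {ω | X ω < c * Y ω ^ 2} < 1 := by
    have hposX2 : 0 < μ (X ⁻¹' Set.Ioi c) := by
      have heq : μ (X ⁻¹' Set.Ioi c) = (μ.map X) (Set.Ioi c) :=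
        (Measure.map_apply hXm measurableSet_Ioi).symm
      rw [heq, hX, expMeasure]
      exact lt_of_lt_of_le
        (gammaMeasure_Ioo_pos_aux one_pos hr hcpos.le (lt_add_one c))
        (measure_mono fun x hx => hx.1)
    have hposY2 : 0 < μ (Y ⁻¹' Set.Ioo (-1) 1) := by
      have heq : μ (Y ⁻¹' Set.Ioo (-1) 1) = (μ.map Y) (Set.Ioo (-1) 1) :=
        (Measure.map_apply hYm measurableSet_Ioo).symm
      rw [heq, hY]
      exact lt_of_lt_of_le (gammaMeasure_Ioo_pos_aux hα hrβ le_rfl one_pos)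
        (measure_mono fun x hx => ⟨by linarith [hx.1], hx.2⟩)
    have hcompl : 0 < μ ({ω | X ω < c * Y ω ^ 2}ᶜ) := by
      refine lt_of_lt_of_le ?_
        (measure_mono (s := X ⁻¹' Set.Ioi c ∩ Y ⁻¹' Set.Ioo (-1) 1) ?_)
      · rw [hInd.measure_inter_preimage_eq_mul _ _ measurableSet_Ioi measurableSet_Ioo]
        exact ENNReal.mul_pos hposX2.ne' hposY2.ne'
      · rintro ω ⟨h1, h2⟩
        simp only [Set.mem_preimage, Set.mem_Ioi, Set.mem_Ioo] at h1 h2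
        simp only [Set.mem_compl_iff, Set.mem_setOf_eq, not_lt]
        have hY2 : Y ω ^ 2 ≤ 1 := by nlinarith [h2.1, h2.2]
        nlinarith [mul_le_mul_of_nonneg_left hY2 hcpos.le]
    calc μ {ω | X ω < c * Y ω ^ 2}
        < μ {ω | X ω < c * Y ω ^ 2} + μ ({ω | X ω < c * Y ω ^ 2}ᶜ) :=
          ENNReal.lt_add_right (measure_ne_top μ _) hcompl.ne'
      _ = 1 := (measure_add_measure_compl hSm0).trans measure_univ
  have htoRealpos : 0 < (μ {ω | X ω < c * Y ω ^ 2}).toReal :=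
    ENNReal.toReal_pos hposE.ne' (measure_ne_top μ _)
  have htoReallt : (μ {ω | X ω < c * Y ω ^ 2}).toReal < 1 := by
    rw [← ENNReal.toReal_one]
    exact (ENNReal.toReal_lt_toReal (measure_ne_top μ _) ENNReal.one_ne_top).mpr hltE
  refine ⟨hmainlim, ⟨htoRealpos, htoReallt⟩, ?_⟩
  -- part (iii) : zero secrecy diversity order
  have hlog : Tendsto (fun ρ : ℝ =>
      Real.log ((μ {ω | ρ * X ω / (κ ^ 2 * ρ * Y ω ^ 2 + 1) < ε}).toReal)) atTop
      (𝓝 (Real.log ((μ {ω | X ω < c * Y ω ^ 2}).toReal))) :=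
    hmainlim.log htoRealpos.ne'
  have hinv : Tendsto (fun ρ : ℝ => (Real.log ρ)⁻¹) atTop (𝓝 0) :=
    tendsto_inv_atTop_zero.comp Real.tendsto_log_atTop
  have hfinal := hlog.neg.mul hinv
  simpa [div_eq_mul_inv] using hfinal
end

section
/- Let X be exponentially distributed with mean Ω_ipu > 0, let Y have the Gamma distribution of shape parameter α+1 > 0 and scale parameter β > 0, with X and Y independent, and let κ > 0, ϖ > 0, c > 0. Then, with P(ρ) := P( κ²ρY²/(ϖρX + 1) < c ): (i) lim_{ρ→∞} P(ρ) = P( κ²Y² < c ϖ X ); (ii) 0 < P(κ²Y² < cϖX) < 1; and consequently (iii) lim_{ρ→∞} −log P(ρ) / log ρ = 0, i.e., the secrecy diversity order of the backscatter signal under imperfect SIC is zero. -/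
open MeasureTheory ProbabilityTheory Real Filter Topology
open scoped ENNReal

lemma measurable_gammaPDF_aux (a r : ℝ) : Measurable (ProbabilityTheory.gammaPDF a r) :=
  (ProbabilityTheory.measurable_gammaPDFReal a r).ennreal_ofReal

lemma gammaPDF_ne_zero_aux {a r x : ℝ} (ha : 0 < a) (hr : 0 < r) (hx : 0 < x) :
    ProbabilityTheory.gammaPDF a r x ≠ 0 := by
  have h := ProbabilityTheory.gammaPDFReal_pos ha hr hx
  have : ProbabilityTheory.gammaPDF a r x = ENNReal.ofReal (ProbabilityTheory.gammaPDFReal a r x) := rfl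
  rw [this]
  simp only [ne_eq, ENNReal.ofReal_eq_zero, not_le]
  exact h

lemma withDensity_pos_aux {f : ℝ → ℝ≥0∞} (hf : Measurable f) {s : Set ℝ}
    (hs : MeasurableSet s) (hvol : volume s ≠ 0) (hpos : ∀ x ∈ s, f x ≠ 0) :
    0 < (volume.withDensity f) s := by
  rw [withDensity_apply _ hs, pos_iff_ne_zero]
  intro h
  rw [setLIntegral_eq_zero_iff hs hf] at h
  have hsub : s ⊆ {x | ¬(x ∈ s → f x = 0)} := fun x hx h' => hpos x hx (h' hx)
  exact hvol (measure_mono_null hsub (ae_iff.mp h))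

/-- Remark 2 (first part): with `X` exponential of mean `Ωipu` (residual interference
power of imperfect SIC) and `Y` Gamma(α+1, scale β) (cascaded RIS gain), independent,
the secrecy outage probability `P(ρ) = P(κ²ρY²/(ϖρX + 1) < c)` of the backscatter
signal converges, as the transmit SNR `ρ → ∞`, to the error floor
`P(κ²Y² < cϖX) ∈ (0, 1)`; hence the secrecy diversity order
`lim_{ρ→∞} -log P(ρ)/log ρ` equals zero. -/
theorem secrecy_diversity_order_backscatter_ipSIC_zero
    {Ω' : Type*} [MeasurableSpace Ω'] (μ : Measure Ω') [IsProbabilityMeasure μ]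
    (X Y : Ω' → ℝ) (hXm : Measurable X) (hYm : Measurable Y)
    (α β Ωipu : ℝ) (hα : 0 < α + 1) (hβ : 0 < β) (hΩipu : 0 < Ωipu)
    (hX : μ.map X = expMeasure Ωipu⁻¹)
    (hY : μ.map Y = gammaMeasure (α + 1) β⁻¹)
    (hInd : IndepFun X Y μ)
    (κ ϖ c : ℝ) (hκ : 0 < κ) (hϖ : 0 < ϖ) (hc : 0 < c) :
    Tendsto (fun ρ : ℝ =>
        (μ {ω | κ ^ 2 * ρ * (Y ω) ^ 2 / (ϖ * ρ * X ω + 1) < c}).toReal) atTop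
      (nhds ((μ {ω | κ ^ 2 * (Y ω) ^ 2 < c * ϖ * X ω}).toReal)) ∧
    (0 < (μ {ω | κ ^ 2 * (Y ω) ^ 2 < c * ϖ * X ω}).toReal ∧
      (μ {ω | κ ^ 2 * (Y ω) ^ 2 < c * ϖ * X ω}).toReal < 1) ∧
    Tendsto (fun ρ : ℝ =>
        -Real.log ((μ {ω | κ ^ 2 * ρ * (Y ω) ^ 2 / (ϖ * ρ * X ω + 1) < c}).toReal) /
          Real.log ρ) atTop (nhds 0) := by
  have hr : 0 < Ωipu⁻¹ := inv_pos.mpr hΩipu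
  have hb : 0 < β⁻¹ := inv_pos.mpr hβ
  haveI hPexp : IsProbabilityMeasure (expMeasure Ωipu⁻¹) := isProbabilityMeasure_expMeasure hr
  haveI hPgam : IsProbabilityMeasure (gammaMeasure (α + 1) β⁻¹) := isProbabilityMeasure_gammaMeasure hα hb
  set ν : Measure (ℝ × ℝ) := (expMeasure Ωipu⁻¹).prod (gammaMeasure (α + 1) β⁻¹) with hν
  haveI : IsProbabilityMeasure ν := by rw [hν]; infer_instance
  -- joint law
  have hJ : μ.map (fun ω => (X ω, Y ω)) = ν := by
    rw [hν, ← hX, ← hY]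
    exact (indepFun_iff_map_prod_eq_prod_map_map hXm.aemeasurable hYm.aemeasurable).mp hInd
  have hmap : ∀ B : Set (ℝ × ℝ), MeasurableSet B →
      μ {ω | (X ω, Y ω) ∈ B} = ν B := by
    intro B hB
    rw [← hJ, Measure.map_apply (hXm.prodMk hYm) hB]
    rfl
  -- X ≥ 0 a.e.
  have hX0 : ∀ᵐ ω ∂μ, 0 ≤ X ω := by
    rw [ae_iff]
    have : {ω | ¬ 0 ≤ X ω} = X ⁻¹' (Set.Iio 0) := by
      ext ω; simp [not_le]
    rw [this, ← Measure.map_apply hXm measurableSet_Iio, hX]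
    show gammaMeasure 1 Ωipu⁻¹ (Set.Iio 0) = 0
    rw [gammaMeasure, withDensity_apply _ measurableSet_Iio]
    exact lintegral_gammaPDF_of_nonpos le_rfl
  -- the limit sets
  set S : Set Ω' := {ω | κ ^ 2 * (Y ω) ^ 2 < c * ϖ * X ω} with hS
  set B' : Set (ℝ × ℝ) := {p | κ ^ 2 * p.2 ^ 2 < c * ϖ * p.1} with hB'
  have hB'meas : MeasurableSet B' :=
    measurableSet_lt (by fun_prop) (by fun_prop)
  have hSB' : μ S = ν B' := hmap B' hB'meas
  -- boundary has measure zero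
  set N : Set (ℝ × ℝ) := {p | κ ^ 2 * p.2 ^ 2 = c * ϖ * p.1} with hNdef
  have hNmeas : MeasurableSet N :=
    measurableSet_eq_fun (by fun_prop) (by fun_prop)
  have hNzero : ν N = 0 := by
    rw [hν, Measure.prod_apply hNmeas]
    have : ∀ x : ℝ, (gammaMeasure (α + 1) β⁻¹) (Prod.mk x ⁻¹' N) = 0 := by
      intro x
      have hsub : (Prod.mk x ⁻¹' N) ⊆
          {Real.sqrt (c * ϖ * x / κ ^ 2), -Real.sqrt (c * ϖ * x / κ ^ 2)} := by
        intro y hy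
        have hy2 : y ^ 2 = c * ϖ * x / κ ^ 2 := by
          have : κ ^ 2 * y ^ 2 = c * ϖ * x := hy
          field_simp
          linarith [this]
        have habs : |y| = Real.sqrt (c * ϖ * x / κ ^ 2) := by
          rw [← hy2, Real.sqrt_sq_eq_abs]
        rcases abs_eq (Real.sqrt_nonneg _) |>.mp habs with h | h <;> simp [h]
      have hvol0 : volume (Prod.mk x ⁻¹' N) = 0 :=
        measure_mono_null hsub ((Set.finite_singleton _ |>.insert _).measure_zero _)
      rw [gammaMeasure]
      exact (withDensity_absolutelyContinuous volume _) hvol0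
    simp [this]
  -- closed set version
  set Sc : Set Ω' := {ω | κ ^ 2 * (Y ω) ^ 2 ≤ c * ϖ * X ω} with hSc
  have hScS : μ Sc = μ S := by
    refine le_antisymm ?_ (measure_mono fun ω h => show κ ^ 2 * (Y ω) ^ 2 ≤ c * ϖ * X ω from le_of_lt h)
    have hsub : Sc ⊆ S ∪ {ω | (X ω, Y ω) ∈ N} := by
      intro ω h
      have hle : κ ^ 2 * (Y ω) ^ 2 ≤ c * ϖ * X ω := h
      rcases lt_or_eq_of_le hle with h' | h'
      · exact Or.inl h'
      · exact Or.inr h'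
    calc μ Sc ≤ μ (S ∪ {ω | (X ω, Y ω) ∈ N}) := measure_mono hsub
      _ ≤ μ S + μ {ω | (X ω, Y ω) ∈ N} := measure_union_le _ _
      _ = μ S := by rw [hmap N hNmeas, hNzero, add_zero]
  -- the decreasing family
  set G : ℝ → Set Ω' := fun ρ => {ω | κ ^ 2 * (Y ω) ^ 2 < c * ϖ * X ω + c / max ρ 1} with hG
  have hGmeas : ∀ ρ, MeasurableSet (G ρ) := fun ρ =>
    measurableSet_lt (by fun_prop) (by fun_prop)
  have hGanti : Antitone G := by
    intro ρ₁ ρ₂ h12 ω hω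
    have h1 : (1:ℝ) ≤ max ρ₁ 1 := le_max_right _ _
    have hle : c / max ρ₂ 1 ≤ c / max ρ₁ 1 := by
      apply div_le_div_of_nonneg_left hc.le (lt_of_lt_of_le one_pos h1)
      exact max_le_max h12 le_rfl
    have := hω
    simp only [hG, Set.mem_setOf_eq] at this ⊢
    linarith
  have hGinter : (⋂ ρ : ℝ, G ρ) = Sc := by
    ext ω
    simp only [Set.mem_iInter, hG, Set.mem_setOf_eq, hSc]
    constructor
    · intro h
      by_contra hlt
      push_neg at hlt
      set ε := κ ^ 2 * (Y ω) ^ 2 - c * ϖ * X ω with hε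
      have hεpos : 0 < ε := by simp [hε]; linarith
      have h1 : c / ε ≤ max (c / ε) 1 := le_max_left _ _
      have h2 : (0:ℝ) < max (c / ε) 1 := lt_of_lt_of_le one_pos (le_max_right _ _)
      have h3 : c / max (c / ε) 1 ≤ ε := by
        rw [div_le_iff₀ h2]
        calc c = (c / ε) * ε := by field_simp
          _ ≤ max (c / ε) 1 * ε := by
              apply mul_le_mul_of_nonneg_right h1 hεpos.le
          _ = ε * max (c / ε) 1 := by ring
      have := h (c / ε)
      simp [hε] at h3
      linarith
    · intro h ρ
      have h1 : (0:ℝ) < max ρ 1 := lt_of_lt_of_le one_pos (le_max_right _ _)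
      have : 0 < c / max ρ 1 := div_pos hc h1
      linarith
  -- measure of E ρ equals measure of G ρ eventually
  have hEG : ∀ᶠ ρ in (atTop : Filter ℝ),
      μ {ω | κ ^ 2 * ρ * (Y ω) ^ 2 / (ϖ * ρ * X ω + 1) < c} = μ (G ρ) := by
    filter_upwards [eventually_ge_atTop (1:ℝ)] with ρ hρ1
    have hρ : (0:ℝ) < ρ := lt_of_lt_of_le one_pos hρ1
    apply measure_congr
    filter_upwards [hX0] with ω hx
    have hmax : max ρ 1 = ρ := max_eq_left hρ1
    have hd : 0 < ϖ * ρ * X ω + 1 := by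
      nlinarith [mul_nonneg (mul_nonneg hϖ.le hρ.le) hx]
    show (κ ^ 2 * ρ * (Y ω) ^ 2 / (ϖ * ρ * X ω + 1) < c)
        = (κ ^ 2 * (Y ω) ^ 2 < c * ϖ * X ω + c / max ρ 1)
    rw [eq_iff_iff, div_lt_iff₀ hd, hmax]
    have e1 : c * (ϖ * ρ * X ω + 1) = ρ * (c * ϖ * X ω + c / ρ) := by
      field_simp
    have e2 : κ ^ 2 * ρ * (Y ω) ^ 2 = ρ * (κ ^ 2 * (Y ω) ^ 2) := by ring
    rw [e1, e2, mul_lt_mul_iff_right₀ hρ]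
  -- convergence of measures
  have htendsN : Tendsto (fun ρ : ℝ =>
      μ {ω | κ ^ 2 * ρ * (Y ω) ^ 2 / (ϖ * ρ * X ω + 1) < c}) atTop (nhds (μ S)) := by
    have h1 : Tendsto (μ ∘ G) atTop (nhds (μ (⋂ ρ, G ρ))) :=
      tendsto_measure_iInter_atTop (fun i => (hGmeas i).nullMeasurableSet) hGanti
        ⟨1, measure_ne_top μ _⟩
    rw [hGinter, hScS] at h1
    exact Tendsto.congr' (hEG.mono fun ρ h => h.symm) h1
  have htends : Tendsto (fun ρ : ℝ =>
      (μ {ω | κ ^ 2 * ρ * (Y ω) ^ 2 / (ϖ * ρ * X ω + 1) < c}).toReal) atTop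
      (nhds ((μ S).toReal)) :=
    (ENNReal.tendsto_toReal (measure_ne_top μ S)).comp htendsN
  -- positivity
  have hpos : 0 < ν B' := by
    have hx₀ : (0:ℝ) < κ ^ 2 / (c * ϖ) := by positivity
    have hsub : (Set.Ioi (κ ^ 2 / (c * ϖ)) ×ˢ Set.Ioo (0:ℝ) 1) ⊆ B' := by
      rintro ⟨x, y⟩ ⟨hx, hy0, hy1⟩
      replace hx : κ ^ 2 / (c * ϖ) < x := hx
      replace hy0 : 0 < y := hy0
      replace hy1 : y < 1 := hy1
      simp only [hB', Set.mem_setOf_eq]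
      have hy2 : y ^ 2 < 1 := by nlinarith
      have h1 : κ ^ 2 * y ^ 2 < κ ^ 2 := by nlinarith [pow_pos hκ 2]
      have h2 : κ ^ 2 = c * ϖ * (κ ^ 2 / (c * ϖ)) := by field_simp
      have h3 : c * ϖ * (κ ^ 2 / (c * ϖ)) < c * ϖ * x :=
        mul_lt_mul_of_pos_left hx (by positivity)
      linarith
    refine lt_of_lt_of_le ?_ (measure_mono hsub)
    rw [hν, Measure.prod_prod]
    have hexp : 0 < (expMeasure Ωipu⁻¹) (Set.Ioi (κ ^ 2 / (c * ϖ))) := by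
      rw [expMeasure, gammaMeasure]
      refine withDensity_pos_aux (measurable_gammaPDF_aux _ _) measurableSet_Ioi ?_ ?_
      · simp [Real.volume_Ioi]
      · intro x hx
        exact gammaPDF_ne_zero_aux zero_lt_one hr (lt_trans hx₀ hx)
    have hgam : 0 < (gammaMeasure (α + 1) β⁻¹) (Set.Ioo (0:ℝ) 1) := by
      rw [gammaMeasure]
      refine withDensity_pos_aux (measurable_gammaPDF_aux _ _) measurableSet_Ioo ?_ ?_
      · simp [Real.volume_Ioo]
      · intro y hy
        exact gammaPDF_ne_zero_aux hα hb hy.1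
    exact ENNReal.mul_pos hexp.ne' hgam.ne'
  -- strictly less than one
  have hlt1 : ν B' < 1 := by
    have hy₁ : (0:ℝ) < Real.sqrt (c * ϖ) / κ := by positivity
    have hsub : (Set.Ioo (0:ℝ) 1 ×ˢ Set.Ioi (Real.sqrt (c * ϖ) / κ)) ⊆ B'ᶜ := by
      rintro ⟨x, y⟩ ⟨⟨hx0, hx1⟩, hy⟩
      replace hx0 : 0 < x := hx0
      replace hx1 : x < 1 := hx1
      replace hy : Real.sqrt (c * ϖ) / κ < y := hy
      simp only [hB', Set.mem_compl_iff, Set.mem_setOf_eq, not_lt]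
      have hsq : κ ^ 2 * (Real.sqrt (c * ϖ) / κ) ^ 2 = c * ϖ := by
        rw [div_pow, Real.sq_sqrt (by positivity : (0:ℝ) ≤ c * ϖ)]
        field_simp
      have h1 : κ ^ 2 * (Real.sqrt (c * ϖ) / κ) ^ 2 ≤ κ ^ 2 * y ^ 2 := by
        have : (Real.sqrt (c * ϖ) / κ) ^ 2 ≤ y ^ 2 := by nlinarith
        nlinarith
      have h2 : c * ϖ * x < c * ϖ := by nlinarith [mul_pos hc hϖ]
      linarith
    have hcpos : 0 < ν B'ᶜ := by
      refine lt_of_lt_of_le ?_ (measure_mono hsub)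
      rw [hν, Measure.prod_prod]
      have hexp : 0 < (expMeasure Ωipu⁻¹) (Set.Ioo (0:ℝ) 1) := by
        rw [expMeasure, gammaMeasure]
        refine withDensity_pos_aux (measurable_gammaPDF_aux _ _) measurableSet_Ioo ?_ ?_
        · simp [Real.volume_Ioo]
        · intro x hx
          exact gammaPDF_ne_zero_aux zero_lt_one hr hx.1
      have hgam : 0 < (gammaMeasure (α + 1) β⁻¹) (Set.Ioi (Real.sqrt (c * ϖ) / κ)) := by
        rw [gammaMeasure]
        refine withDensity_pos_aux (measurable_gammaPDF_aux _ _) measurableSet_Ioi ?_ ?_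
        · simp [Real.volume_Ioi]
        · intro y hy
          exact gammaPDF_ne_zero_aux hα hb (lt_trans hy₁ hy)
      exact ENNReal.mul_pos hexp.ne' hgam.ne'
    refine lt_of_le_of_ne prob_le_one (fun h => ?_)
    have := measure_compl hB'meas (measure_ne_top ν B')
    rw [h, measure_univ, tsub_self] at this
    rw [this] at hcpos
    exact lt_irrefl _ hcpos
  have hSpos : 0 < (μ S).toReal := by
    rw [hSB']
    exact ENNReal.toReal_pos hpos.ne' (measure_ne_top ν B')
  have hSlt1 : (μ S).toReal < 1 := by
    rw [hSB']
    have := (ENNReal.toReal_lt_toReal (measure_ne_top ν B') ENNReal.one_ne_top).mpr hlt1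
    simpa using this
  refine ⟨htends, ⟨hSpos, hSlt1⟩, ?_⟩
  -- diversity order zero
  have hlog : Tendsto (fun ρ : ℝ =>
      -Real.log ((μ {ω | κ ^ 2 * ρ * (Y ω) ^ 2 / (ϖ * ρ * X ω + 1) < c}).toReal)) atTop
      (nhds (-Real.log ((μ S).toReal))) :=
    ((Real.continuousAt_log hSpos.ne').tendsto.comp htends).neg
  have hinv : Tendsto (fun ρ : ℝ => (Real.log ρ)⁻¹) atTop (nhds 0) :=
    Real.tendsto_log_atTop.inv_tendsto_atTop
  have := hlog.mul hinv
  rw [mul_zero] at this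
  exact this.congr (fun ρ => by rw [div_eq_mul_inv])
end

section
/- For all real s > 0 and c > 0, lim_{ρ→∞} −log( γ(s, c/√ρ) / Γ(s) ) / log ρ = s/2, where γ(s,u) = ∫₀^u t^{s−1} e^{−t} dt is the lower incomplete gamma function. In particular, taking s = α+1 with α+1 = π²M/(16 − π²) for a positive integer M, the secrecy diversity order of the backscatter signal with perfect SIC, whose secrecy outage probability at transmit SNR ρ equals γ(α+1, c/√ρ)/Γ(α+1), equals Mπ²/(2(16 − π²)). -/
open MeasureTheory Real Filter Topology

/-- The lower incomplete gamma function `γ(s, u) = ∫₀ᵘ t^(s-1) e^(-t) dt`. -/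
noncomputable def lowerGamma (s u : ℝ) : ℝ := ∫ t in (0:ℝ)..u, t ^ (s - 1) * Real.exp (-t)

lemma lowerGamma_diversity (s c : ℝ) (hs : 0 < s) (hc : 0 < c) :
    Tendsto (fun ρ : ℝ =>
        -Real.log (lowerGamma s (c / Real.sqrt ρ) / Real.Gamma s) / Real.log ρ)
      atTop (nhds (s / 2)) := by
  have hΓ : 0 < Real.Gamma s := Real.Gamma_pos_of_pos hs
  set B : ℝ := Real.log (Real.Gamma s) + Real.log s - s * Real.log c with hB
  have hb : ∀ A : ℝ, Tendsto (fun ρ : ℝ => A / Real.log ρ + s / 2) atTop (nhds (s / 2)) := by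
    intro A
    have h0 : Tendsto (fun ρ : ℝ => A / Real.log ρ) atTop (nhds 0) :=
      tendsto_const_nhds.div_atTop Real.tendsto_log_atTop
    simpa using h0.add (tendsto_const_nhds (x := s / 2))
  have key : ∀ᶠ ρ : ℝ in atTop,
      B / Real.log ρ + s / 2
        ≤ -Real.log (lowerGamma s (c / Real.sqrt ρ) / Real.Gamma s) / Real.log ρ ∧
      -Real.log (lowerGamma s (c / Real.sqrt ρ) / Real.Gamma s) / Real.log ρ
        ≤ (B + 1) / Real.log ρ + s / 2 := by
    filter_upwards [eventually_ge_atTop (c ^ 2), eventually_ge_atTop (Real.exp 1)]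
      with ρ hρc hρe
    have hρ0 : 0 < ρ := lt_of_lt_of_le (Real.exp_pos 1) hρe
    have hlog1 : 1 ≤ Real.log ρ := (Real.le_log_iff_exp_le hρ0).2 hρe
    have hlρ : 0 < Real.log ρ := lt_of_lt_of_le one_pos hlog1
    have hsq : 0 < Real.sqrt ρ := Real.sqrt_pos.2 hρ0
    set u : ℝ := c / Real.sqrt ρ with hudef
    have hu : 0 < u := div_pos hc hsq
    have hu1 : u ≤ 1 := by
      rw [div_le_one hsq]
      calc c = Real.sqrt (c ^ 2) := by rw [Real.sqrt_sq hc.le]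
        _ ≤ Real.sqrt ρ := Real.sqrt_le_sqrt hρc
    -- integrability
    have hint : IntervalIntegrable (fun t => t ^ (s - 1) * Real.exp (-t)) volume 0 u := by
      rw [intervalIntegrable_iff_integrableOn_Ioc_of_le hu.le]
      have h := (Real.GammaIntegral_convergent hs).mono_set
        (Set.Ioc_subset_Ioi_self : Set.Ioc 0 u ⊆ Set.Ioi 0)
      simpa [mul_comm] using h
    have hintp : IntervalIntegrable (fun t : ℝ => t ^ (s - 1)) volume 0 u :=
      intervalIntegral.intervalIntegrable_rpow' (by linarith)
    have hrpow : (∫ t in (0:ℝ)..u, t ^ (s - 1)) = u ^ s / s := by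
      rw [integral_rpow (Or.inl (by linarith))]
      have h1 : s - 1 + 1 = s := by ring
      rw [h1, Real.zero_rpow hs.ne']
      ring
    -- upper bound
    have hup : lowerGamma s u ≤ u ^ s / s := by
      have h1 : lowerGamma s u ≤ ∫ t in (0:ℝ)..u, t ^ (s - 1) := by
        apply intervalIntegral.integral_mono_on hu.le hint hintp
        intro t ht
        have ht0 : 0 ≤ t := ht.1
        calc t ^ (s - 1) * Real.exp (-t) ≤ t ^ (s - 1) * 1 :=
              mul_le_mul_of_nonneg_left (Real.exp_le_one_iff.2 (by linarith))
                (Real.rpow_nonneg ht0 _)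
          _ = t ^ (s - 1) := mul_one _
      rwa [hrpow] at h1
    -- lower bound
    have hlo : Real.exp (-1) * (u ^ s / s) ≤ lowerGamma s u := by
      have h2 : (∫ t in (0:ℝ)..u, t ^ (s - 1) * Real.exp (-u)) ≤ lowerGamma s u := by
        apply intervalIntegral.integral_mono_on hu.le (hintp.mul_const _) hint
        intro t ht
        exact mul_le_mul_of_nonneg_left (Real.exp_le_exp.2 (by linarith [ht.2]))
          (Real.rpow_nonneg ht.1 _)
      rw [intervalIntegral.integral_mul_const, hrpow] at h2
      calc Real.exp (-1) * (u ^ s / s) ≤ Real.exp (-u) * (u ^ s / s) := by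
            apply mul_le_mul_of_nonneg_right (Real.exp_le_exp.2 (by linarith))
            positivity
        _ = u ^ s / s * Real.exp (-u) := by ring
        _ ≤ lowerGamma s u := h2
    have hγpos : 0 < lowerGamma s u := lt_of_lt_of_le (by positivity) hlo
    have hlogu : Real.log u = Real.log c - Real.log ρ / 2 := by
      rw [hudef, Real.log_div hc.ne' hsq.ne', Real.log_sqrt hρ0.le]
    have hlogpow : Real.log (u ^ s / s) = s * Real.log u - Real.log s := by
      rw [Real.log_div (Real.rpow_pos_of_pos hu s).ne' hs.ne', Real.log_rpow hu]
    have hlogγ_le : Real.log (lowerGamma s u)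
        ≤ s * Real.log c - s / 2 * Real.log ρ - Real.log s := by
      have h := Real.log_le_log hγpos hup
      rw [hlogpow, hlogu] at h
      nlinarith [h]
    have hlogγ_ge : -1 + (s * Real.log c - s / 2 * Real.log ρ - Real.log s)
        ≤ Real.log (lowerGamma s u) := by
      have h := Real.log_le_log (by positivity) hlo
      rw [Real.log_mul (Real.exp_pos _).ne' (by positivity), Real.log_exp, hlogpow, hlogu] at h
      nlinarith [h]
    have hL : -Real.log (lowerGamma s u / Real.Gamma s)
        = Real.log (Real.Gamma s) - Real.log (lowerGamma s u) := by
      rw [Real.log_div hγpos.ne' hΓ.ne']; ring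
    rw [hL]
    constructor
    · rw [div_add' _ _ _ hlρ.ne']
      gcongr
      linarith
    · rw [div_add' _ _ _ hlρ.ne']
      gcongr
      linarith
  refine tendsto_of_tendsto_of_tendsto_of_le_of_le' (hb B) (hb (B + 1))
    (key.mono fun ρ h => h.1) (key.mono fun ρ h => h.2)

/-- Remark 2 (second part): for `s > 0` and `c > 0`,
`lim_{ρ→∞} -log(γ(s, c/√ρ)/Γ(s)) / log ρ = s/2`.  In particular, taking
`s = α+1 = π²M/(16-π²)` for a positive integer `M`, the secrecy diversity order of the
backscatter signal with perfect SIC equals `Mπ²/(2(16-π²))`. -/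
theorem secrecy_diversity_order_backscatter_pSIC (s c : ℝ) (hs : 0 < s) (hc : 0 < c) :
    Tendsto (fun ρ : ℝ =>
        -Real.log (lowerGamma s (c / Real.sqrt ρ) / Real.Gamma s) / Real.log ρ)
      atTop (nhds (s / 2)) ∧
    ∀ M : ℕ, 0 < M →
      Tendsto (fun ρ : ℝ =>
          -Real.log (lowerGamma (π ^ 2 * M / (16 - π ^ 2)) (c / Real.sqrt ρ) /
              Real.Gamma (π ^ 2 * M / (16 - π ^ 2))) / Real.log ρ)
        atTop (nhds (M * π ^ 2 / (2 * (16 - π ^ 2)))) := by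
  have h16 : (0:ℝ) < 16 - π ^ 2 := by nlinarith [Real.pi_lt_d2, Real.pi_pos]
  refine ⟨lowerGamma_diversity s c hs hc, fun M hM => ?_⟩
  have hMpos : (0:ℝ) < (M : ℝ) := Nat.cast_pos.2 hM
  have hs' : 0 < π ^ 2 * (M : ℝ) / (16 - π ^ 2) := by positivity
  have h := lowerGamma_diversity (π ^ 2 * (M : ℝ) / (16 - π ^ 2)) c hs' hc
  have heq : (M : ℝ) * π ^ 2 / (2 * (16 - π ^ 2)) = π ^ 2 * (M : ℝ) / (16 - π ^ 2) / 2 := by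
    field_simp
  rw [heq]
  exact h
end
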